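/- (Model 2f3n4i) Define vector fields on ℝ⁴ (coordinates (x,y,u,v)) by e₁ = ∂x + y∂u + 2x∂v, e₂ = ∂y + x∂u + 2y∂v, e₃ = x∂x + y∂y + 2u∂u + 2v∂v, e₄ = y∂x + x∂y + v∂u + 4u∂v, and let S = {(x, y, xy, x² + y²) : (x,y) ∈ ℝ²}. Then: (i) each of e₁, e₂, e₃, e₄ is tangent to S; (ii) at every point of S the first two components of e₁ and e₂ are (1,0) and (0,1), so S is affinely homogeneous; (iii) with bracket [X,Y](p) = (DY)(p)(X(p)) − (DX)(p)(Y(p)) one has [e₁,e₂] = 0, [e₁,e₃] = e₁, [e₁,e₄] = e₂, [e₂,e₃] = e₂, [e₂,e₄] = e₁, [e₃,e₄] = 0. -/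

import Mathlib

namespace Model2f3n4i

/-- Lie bracket of vector fields on `ℝ⁴`, `[X,Y](p) = DY(p)(X(p)) − DX(p)(Y(p))`. -/
noncomputable def lieBracket (X Y : (Fin 4 → ℝ) → Fin 4 → ℝ) :
    (Fin 4 → ℝ) → Fin 4 → ℝ :=
  fun p => fderiv ℝ Y p (X p) - fderiv ℝ X p (Y p)

/-- Tangency of a vector field `X` on `ℝ⁴ ∋ (x,y,u,v)` to the graph
`S = {(x, y, F(x,y), G(x,y))}`. -/
def TangentToGraph (F G : ℝ × ℝ → ℝ) (X : (Fin 4 → ℝ) → Fin 4 → ℝ) : Prop :=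
  ∀ p : ℝ × ℝ,
    X ![p.1, p.2, F p, G p] 2
        = fderiv ℝ F p (1, 0) * X ![p.1, p.2, F p, G p] 0
          + fderiv ℝ F p (0, 1) * X ![p.1, p.2, F p, G p] 1 ∧
    X ![p.1, p.2, F p, G p] 3
        = fderiv ℝ G p (1, 0) * X ![p.1, p.2, F p, G p] 0
          + fderiv ℝ G p (0, 1) * X ![p.1, p.2, F p, G p] 1

/-- `u = xy`. -/
noncomputable def F : ℝ × ℝ → ℝ := fun p => p.1 * p.2
/-- `v = x² + y²`. -/
noncomputable def G : ℝ × ℝ → ℝ := fun p => p.1 ^ 2 + p.2 ^ 2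

/-- `e₁ = ∂x + y∂u + 2x∂v`. -/
noncomputable def e₁ : (Fin 4 → ℝ) → Fin 4 → ℝ := fun p => ![1, 0, p 1, 2 * p 0]
/-- `e₂ = ∂y + x∂u + 2y∂v`. -/
noncomputable def e₂ : (Fin 4 → ℝ) → Fin 4 → ℝ := fun p => ![0, 1, p 0, 2 * p 1]
/-- `e₃ = x∂x + y∂y + 2u∂u + 2v∂v`. -/
noncomputable def e₃ : (Fin 4 → ℝ) → Fin 4 → ℝ :=
  fun p => ![p 0, p 1, 2 * p 2, 2 * p 3]
/-- `e₄ = y∂x + x∂y + v∂u + 4u∂v`. -/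
noncomputable def e₄ : (Fin 4 → ℝ) → Fin 4 → ℝ :=
  fun p => ![p 1, p 0, p 3, 4 * p 2]

/-! Auxiliary lemmas -/

noncomputable def L₁ : (Fin 4 → ℝ) →L[ℝ] (Fin 4 → ℝ) :=
  (Matrix.mulVecLin !![0,0,0,0; 0,0,0,0; 0,1,0,0; 2,0,0,0]).toContinuousLinearMap
noncomputable def L₂ : (Fin 4 → ℝ) →L[ℝ] (Fin 4 → ℝ) :=
  (Matrix.mulVecLin !![0,0,0,0; 0,0,0,0; 1,0,0,0; 0,2,0,0]).toContinuousLinearMap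
noncomputable def L₃ : (Fin 4 → ℝ) →L[ℝ] (Fin 4 → ℝ) :=
  (Matrix.mulVecLin !![1,0,0,0; 0,1,0,0; 0,0,2,0; 0,0,0,2]).toContinuousLinearMap
noncomputable def L₄ : (Fin 4 → ℝ) →L[ℝ] (Fin 4 → ℝ) :=
  (Matrix.mulVecLin !![0,1,0,0; 1,0,0,0; 0,0,0,1; 0,0,4,0]).toContinuousLinearMap

lemma L₁_apply (p : Fin 4 → ℝ) : L₁ p = ![0, 0, p 1, 2 * p 0] := by
  funext i
  fin_cases i <;>
    simp [L₁, Matrix.mulVecLin, Matrix.mulVec, dotProduct, Fin.sum_univ_four]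

lemma L₂_apply (p : Fin 4 → ℝ) : L₂ p = ![0, 0, p 0, 2 * p 1] := by
  funext i
  fin_cases i <;>
    simp [L₂, Matrix.mulVecLin, Matrix.mulVec, dotProduct, Fin.sum_univ_four]

lemma L₃_apply (p : Fin 4 → ℝ) : L₃ p = ![p 0, p 1, 2 * p 2, 2 * p 3] := by
  funext i
  fin_cases i <;>
    simp [L₃, Matrix.mulVecLin, Matrix.mulVec, dotProduct, Fin.sum_univ_four]

lemma L₄_apply (p : Fin 4 → ℝ) : L₄ p = ![p 1, p 0, p 3, 4 * p 2] := by
  funext i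
  fin_cases i <;>
    simp [L₄, Matrix.mulVecLin, Matrix.mulVec, dotProduct, Fin.sum_univ_four]

lemma fderiv_e₁ (p : Fin 4 → ℝ) : fderiv ℝ e₁ p = L₁ := by
  have he : e₁ = fun q => ![(1:ℝ), 0, 0, 0] + L₁ q := by
    funext q
    rw [L₁_apply]
    funext i
    fin_cases i <;> simp [e₁]
  rw [he]
  exact (L₁.hasFDerivAt.const_add _).fderiv

lemma fderiv_e₂ (p : Fin 4 → ℝ) : fderiv ℝ e₂ p = L₂ := by
  have he : e₂ = fun q => ![(0:ℝ), 1, 0, 0] + L₂ q := by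
    funext q
    rw [L₂_apply]
    funext i
    fin_cases i <;> simp [e₂]
  rw [he]
  exact (L₂.hasFDerivAt.const_add _).fderiv

lemma fderiv_e₃ (p : Fin 4 → ℝ) : fderiv ℝ e₃ p = L₃ := by
  have he : e₃ = fun q => L₃ q := by
    funext q; rw [L₃_apply]; rfl
  rw [he]
  exact L₃.hasFDerivAt.fderiv

lemma fderiv_e₄ (p : Fin 4 → ℝ) : fderiv ℝ e₄ p = L₄ := by
  have he : e₄ = fun q => L₄ q := by
    funext q; rw [L₄_apply]; rfl
  rw [he]
  exact L₄.hasFDerivAt.fderiv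

lemma fderiv_F (p : ℝ × ℝ) :
    fderiv ℝ F p (1, 0) = p.2 ∧ fderiv ℝ F p (0, 1) = p.1 := by
  have h1 : HasFDerivAt (fun q : ℝ × ℝ => q.1) (ContinuousLinearMap.fst ℝ ℝ ℝ) p :=
    hasFDerivAt_fst
  have h2 : HasFDerivAt (fun q : ℝ × ℝ => q.2) (ContinuousLinearMap.snd ℝ ℝ ℝ) p :=
    hasFDerivAt_snd
  have h : HasFDerivAt (fun q : ℝ × ℝ => q.1 * q.2) _ p := h1.mul h2
  have hFe : F = fun q : ℝ × ℝ => q.1 * q.2 := rfl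
  constructor <;> · rw [hFe, h.fderiv]; simp

lemma fderiv_G (p : ℝ × ℝ) :
    fderiv ℝ G p (1, 0) = 2 * p.1 ∧ fderiv ℝ G p (0, 1) = 2 * p.2 := by
  have h1 : HasFDerivAt (fun q : ℝ × ℝ => q.1) (ContinuousLinearMap.fst ℝ ℝ ℝ) p :=
    hasFDerivAt_fst
  have h2 : HasFDerivAt (fun q : ℝ × ℝ => q.2) (ContinuousLinearMap.snd ℝ ℝ ℝ) p :=
    hasFDerivAt_snd
  have h : HasFDerivAt (fun q : ℝ × ℝ => q.1 * q.1 + q.2 * q.2) _ p :=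
    (h1.mul h1).add (h2.mul h2)
  have he : G = fun q : ℝ × ℝ => q.1 * q.1 + q.2 * q.2 := by
    funext q; simp [G]; ring
  constructor <;> · rw [he, h.fderiv]; simp; ring

/-- **Model 2f3n4i:** the surface `{u = xy, v = x² + y²}` is affinely homogeneous, with
tangent vector fields `e₁, e₂, e₃, e₄` satisfying the stated bracket relations. -/
theorem model_2f3n4i :
    (TangentToGraph F G e₁ ∧ TangentToGraph F G e₂ ∧ TangentToGraph F G e₃ ∧
      TangentToGraph F G e₄) ∧
    (∀ p : ℝ × ℝ,
      e₁ ![p.1, p.2, F p, G p] 0 = 1 ∧ e₁ ![p.1, p.2, F p, G p] 1 = 0 ∧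
      e₂ ![p.1, p.2, F p, G p] 0 = 0 ∧ e₂ ![p.1, p.2, F p, G p] 1 = 1 ∧
      LinearIndependent ℝ
        ![((e₁ ![p.1, p.2, F p, G p] 0, e₁ ![p.1, p.2, F p, G p] 1) : ℝ × ℝ),
          ((e₂ ![p.1, p.2, F p, G p] 0, e₂ ![p.1, p.2, F p, G p] 1) : ℝ × ℝ)]) ∧
    (lieBracket e₁ e₂ = 0 ∧ lieBracket e₁ e₃ = e₁ ∧ lieBracket e₁ e₄ = e₂ ∧
      lieBracket e₂ e₃ = e₂ ∧ lieBracket e₂ e₄ = e₁ ∧ lieBracket e₃ e₄ = 0) := by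
  refine ⟨⟨?_, ?_, ?_, ?_⟩, ?_, ?_, ?_, ?_, ?_, ?_, ?_⟩
  · intro p
    obtain ⟨hF1, hF2⟩ := fderiv_F p
    obtain ⟨hG1, hG2⟩ := fderiv_G p
    rw [hF1, hF2, hG1, hG2]
    constructor <;> simp [e₁]
  · intro p
    obtain ⟨hF1, hF2⟩ := fderiv_F p
    obtain ⟨hG1, hG2⟩ := fderiv_G p
    rw [hF1, hF2, hG1, hG2]
    constructor <;> simp [e₂]
  · intro p
    obtain ⟨hF1, hF2⟩ := fderiv_F p
    obtain ⟨hG1, hG2⟩ := fderiv_G p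
    rw [hF1, hF2, hG1, hG2]
    constructor <;> · simp [e₃, F, G]; ring
  · intro p
    obtain ⟨hF1, hF2⟩ := fderiv_F p
    obtain ⟨hG1, hG2⟩ := fderiv_G p
    rw [hF1, hF2, hG1, hG2]
    constructor <;> · simp [e₄, F, G]; ring
  · intro p
    refine ⟨by simp [e₁], by simp [e₁], by simp [e₂], by simp [e₂], ?_⟩
    have h0 : ((e₁ ![p.1, p.2, F p, G p] 0, e₁ ![p.1, p.2, F p, G p] 1) : ℝ × ℝ)
        = ((1:ℝ), (0:ℝ)) := by simp [e₁]
    have h1 : ((e₂ ![p.1, p.2, F p, G p] 0, e₂ ![p.1, p.2, F p, G p] 1) : ℝ × ℝ)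
        = ((0:ℝ), (1:ℝ)) := by simp [e₂]
    rw [h0, h1, linearIndependent_fin2]
    refine ⟨by simp, fun a h => ?_⟩
    have := congrArg Prod.fst h
    simp at this
  all_goals
    unfold lieBracket
    funext p
  · rw [fderiv_e₁, fderiv_e₂, L₁_apply, L₂_apply]
    funext i; fin_cases i <;> (simp [e₁, e₂]; try ring)
  · rw [fderiv_e₁, fderiv_e₃, L₁_apply, L₃_apply]
    funext i; fin_cases i <;> (simp [e₁, e₃]; try ring)
  · rw [fderiv_e₁, fderiv_e₄, L₁_apply, L₄_apply]
    funext i; fin_cases i <;> (simp [e₁, e₂, e₄]; try ring)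
  · rw [fderiv_e₂, fderiv_e₃, L₂_apply, L₃_apply]
    funext i; fin_cases i <;> (simp [e₂, e₃]; try ring)
  · rw [fderiv_e₂, fderiv_e₄, L₂_apply, L₄_apply]
    funext i; fin_cases i <;> (simp [e₁, e₂, e₄]; try ring)
  · rw [fderiv_e₃, fderiv_e₄, L₃_apply, L₄_apply]
    funext i; fin_cases i <;> (simp [e₃, e₄]; try ring)

end Model2f3n4i
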